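/- arXiv:1909.00238 — 11 statements merged into one kernel-verified Lean document; each statement's English description precedes it below -/
import Mathlib

section
/- Let H be a k-uniform hypergraph with principal eigenpair (ρ, x), maximum degree Δ and minimum degree δ > 0. Then the ratio γ = x_max / x_min satisfies γ ≥ (Δ/δ)^{1/(2(k-1))}. -/
open Finset

theorem stmt4 (V : Type*) [Fintype V] [DecidableEq V] [Nonempty V]
    (k : ℕ) (hk : 2 ≤ k)
    (E : Finset (Finset V))
    (hunif : ∀ e ∈ E, e.card = k)
    (x : V → ℝ) (hx : ∀ v, 0 < x v)
    (ρ : ℝ) (hρ : 0 < ρ)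
    (heig : ∀ v : V, ∑ e ∈ E.filter (fun e => v ∈ e), ∏ u ∈ e.erase v, x u
      = ρ * x v ^ (k - 1))
    (hδ : 0 < (Finset.univ.inf' Finset.univ_nonempty (fun v => ((E.filter (fun e => v ∈ e)).card : ℝ)))) :
    (Finset.univ.sup' Finset.univ_nonempty x) / (Finset.univ.inf' Finset.univ_nonempty x) ≥ ((Finset.univ.sup' Finset.univ_nonempty (fun v => ((E.filter (fun e => v ∈ e)).card : ℝ))) / (Finset.univ.inf' Finset.univ_nonempty (fun v => ((E.filter (fun e => v ∈ e)).card : ℝ)))) ^ ((1:ℝ) / (2 * ((k:ℝ) - 1))) := by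
  set deg : V → ℝ := fun v => ((E.filter (fun e => v ∈ e)).card : ℝ) with hdegdef
  set m := Finset.univ.inf' Finset.univ_nonempty x with hm
  set M := Finset.univ.sup' Finset.univ_nonempty x with hM
  set δ := Finset.univ.inf' Finset.univ_nonempty deg with hδdef
  set Δ := Finset.univ.sup' Finset.univ_nonempty deg with hΔdef
  have hmle : ∀ v, m ≤ x v := fun v => Finset.inf'_le _ (Finset.mem_univ v)
  have hleM : ∀ v, x v ≤ M := fun v => Finset.le_sup' _ (Finset.mem_univ v)
  have hmpos : 0 < m := by
    obtain ⟨v, _, hv⟩ := Finset.exists_mem_eq_inf' Finset.univ_nonempty x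
    rw [hm, hv]; exact hx v
  have hMpos : 0 < M := lt_of_lt_of_le hmpos (by obtain ⟨v⟩ := ‹Nonempty V›; exact (hmle v).trans (hleM v))
  have hδle : ∀ v, δ ≤ deg v := fun v => Finset.inf'_le _ (Finset.mem_univ v)
  have hleΔ : ∀ v, deg v ≤ Δ := fun v => Finset.le_sup' _ (Finset.mem_univ v)
  -- lower and upper bounds on the eigen-sum
  have hcard : ∀ v, ∀ e ∈ E.filter (fun e => v ∈ e), (e.erase v).card = k - 1 := by
    intro v e he
    rw [Finset.mem_filter] at he
    rw [Finset.card_erase_of_mem he.2, hunif e he.1]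
  have hlb : ∀ v, deg v * m ^ (k - 1) ≤ ρ * x v ^ (k - 1) := by
    intro v
    rw [← heig v]
    calc deg v * m ^ (k - 1) = ∑ e ∈ E.filter (fun e => v ∈ e), m ^ (k - 1) := by
          rw [Finset.sum_const, nsmul_eq_mul]
      _ ≤ _ := by
          apply Finset.sum_le_sum
          intro e he
          calc m ^ (k - 1) = ∏ _u ∈ e.erase v, m := by rw [Finset.prod_const, hcard v e he]
            _ ≤ ∏ u ∈ e.erase v, x u :=
                Finset.prod_le_prod (fun _ _ => hmpos.le) (fun u _ => hmle u)
  have hub : ∀ v, ρ * x v ^ (k - 1) ≤ deg v * M ^ (k - 1) := by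
    intro v
    rw [← heig v]
    calc (∑ e ∈ E.filter (fun e => v ∈ e), ∏ u ∈ e.erase v, x u)
        ≤ ∑ e ∈ E.filter (fun e => v ∈ e), M ^ (k - 1) := by
          apply Finset.sum_le_sum
          intro e he
          calc ∏ u ∈ e.erase v, x u ≤ ∏ _u ∈ e.erase v, M :=
                Finset.prod_le_prod (fun u _ => (hx u).le) (fun u _ => hleM u)
            _ = M ^ (k - 1) := by rw [Finset.prod_const, hcard v e he]
      _ = deg v * M ^ (k - 1) := by rw [Finset.sum_const, nsmul_eq_mul]
  -- Δ m^{k-1} ≤ ρ M^{k-1}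
  have hA : Δ * m ^ (k - 1) ≤ ρ * M ^ (k - 1) := by
    obtain ⟨v, _, hv⟩ := Finset.exists_mem_eq_sup' Finset.univ_nonempty deg
    rw [hΔdef, hv]
    refine (hlb v).trans ?_
    exact mul_le_mul_of_nonneg_left (pow_le_pow_left₀ (hx v).le (hleM v) _) hρ.le
  -- ρ m^{k-1} ≤ δ M^{k-1}
  have hB : ρ * m ^ (k - 1) ≤ δ * M ^ (k - 1) := by
    obtain ⟨v, _, hv⟩ := Finset.exists_mem_eq_inf' Finset.univ_nonempty deg
    rw [hδdef, hv]
    refine le_trans ?_ (hub v)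
    exact mul_le_mul_of_nonneg_left (pow_le_pow_left₀ hmpos.le (hmle v) _) hρ.le
  have hδpos : 0 < δ := hδ
  have hΔpos : 0 < Δ := by
    obtain ⟨v⟩ := ‹Nonempty V›; exact hδpos.trans_le ((hδle v).trans (hleΔ v))
  -- combine
  set n : ℕ := 2 * (k - 1) with hn
  have hkey : Δ * m ^ n ≤ δ * M ^ n := by
    have := mul_le_mul hA hB (by positivity) (by positivity)
    have h2 : ρ * (Δ * m ^ n) ≤ ρ * (δ * M ^ n) := by
      calc ρ * (Δ * m ^ n) = Δ * m ^ (k-1) * (ρ * m ^ (k-1)) := by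
            rw [hn, pow_mul]; ring
        _ ≤ ρ * M ^ (k-1) * (δ * M ^ (k-1)) := this
        _ = ρ * (δ * M ^ n) := by rw [hn, pow_mul]; ring
    exact le_of_mul_le_mul_left h2 hρ
  have hdivle : Δ / δ ≤ (M / m) ^ n := by
    rw [div_pow, div_le_div_iff₀ hδpos (by positivity)]
    linarith [hkey]
  -- pass to rpow
  have hcn : (2 * ((k:ℝ) - 1)) = (n : ℝ) := by
    have : ((k:ℝ) - 1) = ((k - 1 : ℕ) : ℝ) := by
      rw [Nat.cast_sub (by omega)]; norm_num
    rw [this, hn]; push_cast; ring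
  have hnpos : (0:ℝ) < (n:ℝ) := by
    have : 0 < n := by omega
    exact_mod_cast this
  rw [ge_iff_le, hcn]
  calc (Δ / δ) ^ ((1:ℝ) / (n:ℝ))
      ≤ ((M / m) ^ n) ^ ((1:ℝ) / (n:ℝ)) := by
        apply Real.rpow_le_rpow (by positivity) hdivle (by positivity)
    _ = (M / m) := by
        rw [← Real.rpow_natCast (M / m) n, ← Real.rpow_mul (by positivity)]
        rw [mul_one_div, div_self hnpos.ne', Real.rpow_one]
end

section
/- Let H be a k-uniform hypergraph on n vertices with principal eigenpair (ρ, x) normalized so that ∑_v x_v^k = 1, maximum degree Δ and minimum degree δ > 0. Then x_max - x_min ≥ (Δ^{1/(2(k-1))} − δ^{1/(2(k-1))}) / (Δ^{1/(2(k-1))} · n^{1/k}). -/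
open Finset

theorem stmt5 (V : Type*) [Fintype V] [DecidableEq V] [Nonempty V]
    (k : ℕ) (hk : 2 ≤ k)
    (E : Finset (Finset V))
    (hunif : ∀ e ∈ E, e.card = k)
    (x : V → ℝ) (hx : ∀ v, 0 < x v)
    (ρ : ℝ) (hρ : 0 < ρ)
    (heig : ∀ v : V, ∑ e ∈ E.filter (fun e => v ∈ e), ∏ u ∈ e.erase v, x u
      = ρ * x v ^ (k - 1))
    (hnorm : ∑ v : V, x v ^ k = 1)
    (hδ : 0 < (Finset.univ.inf' Finset.univ_nonempty (fun v => ((E.filter (fun e => v ∈ e)).card : ℝ)))) :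
    (Finset.univ.sup' Finset.univ_nonempty x) - (Finset.univ.inf' Finset.univ_nonempty x) ≥
      ((Finset.univ.sup' Finset.univ_nonempty (fun v => ((E.filter (fun e => v ∈ e)).card : ℝ))) ^ ((1:ℝ) / (2 * ((k:ℝ) - 1))) - (Finset.univ.inf' Finset.univ_nonempty (fun v => ((E.filter (fun e => v ∈ e)).card : ℝ))) ^ ((1:ℝ) / (2 * ((k:ℝ) - 1))))
        / ((Finset.univ.sup' Finset.univ_nonempty (fun v => ((E.filter (fun e => v ∈ e)).card : ℝ))) ^ ((1:ℝ) / (2 * ((k:ℝ) - 1))) * (Fintype.card V : ℝ) ^ ((1:ℝ)/(k:ℝ))) := by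
  classical
  set f : V → ℝ := fun v => ((E.filter (fun e => v ∈ e)).card : ℝ) with hf
  set M := univ.sup' univ_nonempty x with hMdef
  set m := univ.inf' univ_nonempty x with hmdef
  set D := univ.sup' univ_nonempty f with hDdef
  set d := univ.inf' univ_nonempty f with hddef
  set α : ℝ := (1:ℝ)/(2*((k:ℝ)-1)) with hα
  have hk2 : (2:ℝ) ≤ (k:ℝ) := by exact_mod_cast hk
  have hkpos : (0:ℝ) < 2*((k:ℝ)-1) := by linarith
  have hαpos : 0 < α := by rw [hα]; exact div_pos one_pos hkpos
  have hm : 0 < m := by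
    rw [hmdef]
    exact (Finset.lt_inf'_iff _).2 fun v _ => hx v
  have hmM : m ≤ M := by
    obtain ⟨v⟩ := ‹Nonempty V›
    exact le_trans (Finset.inf'_le x (mem_univ v)) (Finset.le_sup' x (mem_univ v))
  have hM : 0 < M := hm.trans_le hmM
  have hd : 0 < d := hδ
  have hdD : d ≤ D := by
    obtain ⟨v⟩ := ‹Nonempty V›
    exact le_trans (Finset.inf'_le f (mem_univ v)) (Finset.le_sup' f (mem_univ v))
  have hD : 0 < D := hd.trans_le hdD
  have hprod_lb : ∀ v : V, ∀ e ∈ E.filter (fun e => v ∈ e), m ^ (k-1) ≤ ∏ w ∈ e.erase v, x w := by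
    intro v e he
    rw [mem_filter] at he
    have hcard : (e.erase v).card = k - 1 := by
      rw [card_erase_of_mem he.2, hunif e he.1]
    calc m ^ (k-1) = ∏ _w ∈ e.erase v, m := by rw [prod_const, hcard]
    _ ≤ ∏ w ∈ e.erase v, x w :=
      Finset.prod_le_prod (fun _ _ => hm.le) (fun w _ => Finset.inf'_le x (mem_univ w))
  have hprod_ub : ∀ v : V, ∀ e ∈ E.filter (fun e => v ∈ e), ∏ w ∈ e.erase v, x w ≤ M ^ (k-1) := by
    intro v e he
    rw [mem_filter] at he
    have hcard : (e.erase v).card = k - 1 := by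
      rw [card_erase_of_mem he.2, hunif e he.1]
    calc ∏ w ∈ e.erase v, x w ≤ ∏ _w ∈ e.erase v, M :=
      Finset.prod_le_prod (fun w _ => (hx w).le) (fun w _ => Finset.le_sup' x (mem_univ w))
    _ = M ^ (k-1) := by rw [prod_const, hcard]
  obtain ⟨u, -, hu0⟩ := Finset.exists_mem_eq_sup' (univ_nonempty) f
  obtain ⟨z, -, hz0⟩ := Finset.exists_mem_eq_inf' (univ_nonempty) f
  have hu : D = f u := hDdef.trans hu0
  have hz : d = f z := hddef.trans hz0
  have hA : D * m ^ (k-1) ≤ ρ * M ^ (k-1) := by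
    have h1 : D * m^(k-1) ≤ ρ * x u ^ (k-1) := by
      rw [← heig u, hu]
      calc f u * m^(k-1) = ∑ _e ∈ E.filter (fun e => u ∈ e), m^(k-1) := by
            rw [sum_const, nsmul_eq_mul]
      _ ≤ ∑ e ∈ E.filter (fun e => u ∈ e), ∏ w ∈ e.erase u, x w :=
            Finset.sum_le_sum (hprod_lb u)
    have h2 : ρ * x u ^ (k-1) ≤ ρ * M ^ (k-1) :=
      mul_le_mul_of_nonneg_left
        (pow_le_pow_left₀ (hx u).le (Finset.le_sup' x (mem_univ u)) _) hρ.le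
    linarith
  have hB : ρ * m ^ (k-1) ≤ d * M ^ (k-1) := by
    have h1 : ρ * x z ^ (k-1) ≤ d * M^(k-1) := by
      rw [← heig z, hz]
      calc ∑ e ∈ E.filter (fun e => z ∈ e), ∏ w ∈ e.erase z, x w
          ≤ ∑ _e ∈ E.filter (fun e => z ∈ e), M^(k-1) := Finset.sum_le_sum (hprod_ub z)
      _ = f z * M^(k-1) := by rw [sum_const, nsmul_eq_mul]
    have h2 : ρ * m ^ (k-1) ≤ ρ * x z ^ (k-1) :=
      mul_le_mul_of_nonneg_left
        (pow_le_pow_left₀ hm.le (Finset.inf'_le x (mem_univ z)) _) hρ.le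
    linarith
  have key4 : D * (m^(k-1))^2 ≤ d * (M^(k-1))^2 := by
    nlinarith [pow_pos hm (k-1), pow_pos hM (k-1), hρ, hd, hD, hA, hB,
      mul_le_mul_of_nonneg_right hA (pow_pos hm (k-1)).le,
      mul_le_mul_of_nonneg_right hB (pow_pos hM (k-1)).le]
  have key4' : D * m ^ (2*(k-1)) ≤ d * M ^ (2*(k-1)) := by
    rw [mul_comm 2 (k-1), pow_mul, pow_mul]; exact key4
  have hNα : ((2*(k-1) : ℕ) : ℝ) * α = 1 := by
    have h1 : 1 ≤ k := by omega
    have hc : ((2*(k-1) : ℕ) : ℝ) = 2*((k:ℝ)-1) := by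
      push_cast [h1]; ring
    rw [hc, hα]
    field_simp
    exact div_self (ne_of_gt (by linarith))
  have hstep := Real.rpow_le_rpow (by positivity) key4' hαpos.le
  rw [Real.mul_rpow hD.le (by positivity), Real.mul_rpow hd.le (by positivity),
      ← Real.rpow_natCast m (2*(k-1)), ← Real.rpow_natCast M (2*(k-1)),
      ← Real.rpow_mul hm.le, ← Real.rpow_mul hM.le,
      hNα, Real.rpow_one, Real.rpow_one] at hstep
  -- hstep : D ^ α * m ≤ d ^ α * M
  have hkR : (0:ℝ) < (k:ℝ) := by linarith
  have hMn : 1 ≤ ((Fintype.card V : ℝ)) ^ ((1:ℝ)/(k:ℝ)) * M := by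
    have h1 : (1:ℝ) ≤ (Fintype.card V : ℝ) * M ^ k := by
      calc (1:ℝ) = ∑ v, x v ^ k := hnorm.symm
      _ ≤ ∑ _v : V, M ^ k :=
          Finset.sum_le_sum fun v _ =>
            pow_le_pow_left₀ (hx v).le (Finset.le_sup' x (mem_univ v)) k
      _ = (Fintype.card V : ℝ) * M ^ k := by rw [sum_const, card_univ, nsmul_eq_mul]
    have h2 := Real.rpow_le_rpow zero_le_one h1 (by positivity : (0:ℝ) ≤ 1/(k:ℝ))
    rwa [Real.one_rpow, Real.mul_rpow (by positivity) (by positivity),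
      ← Real.rpow_natCast M k, ← Real.rpow_mul hM.le, mul_one_div,
      div_self hkR.ne', Real.rpow_one] at h2
  have hDα : 0 < D ^ α := Real.rpow_pos_of_pos hD α
  have hdα : 0 < d ^ α := Real.rpow_pos_of_pos hd α
  have hdDα : d ^ α ≤ D ^ α := Real.rpow_le_rpow hd.le hdD hαpos.le
  have hnk : 0 < ((Fintype.card V:ℝ)) ^ ((1:ℝ)/(k:ℝ)) :=
    Real.rpow_pos_of_pos (by exact_mod_cast Fintype.card_pos) _
  rw [ge_iff_le, div_le_iff₀ (by positivity)]
  nlinarith [mul_le_mul_of_nonneg_right hstep hnk.le,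
    mul_le_mul_of_nonneg_left hMn (sub_nonneg.2 hdDα),
    hM, hm, hDα.le, hnk.le, hdα.le]
end

section
/- Let H be a k-uniform hypergraph on n vertices with principal eigenpair (ρ, x) normalized by ∑_v x_v^k = 1, with maximum degree Δ and minimum degree δ > 0. Then x_max ≥ ( (δ/Δ)^{k/(2(k-1))} + n − 1 )^{-1/k}. -/
open Finset

theorem stmt6 (V : Type*) [Fintype V] [DecidableEq V] [Nonempty V]
    (k : ℕ) (hk : 2 ≤ k)
    (E : Finset (Finset V))
    (hunif : ∀ e ∈ E, e.card = k)
    (x : V → ℝ) (hx : ∀ v, 0 < x v)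
    (ρ : ℝ) (hρ : 0 < ρ)
    (heig : ∀ v : V, ∑ e ∈ E.filter (fun e => v ∈ e), ∏ u ∈ e.erase v, x u
      = ρ * x v ^ (k - 1))
    (hnorm : ∑ v : V, x v ^ k = 1)
    (hδ : 0 < (Finset.univ.inf' Finset.univ_nonempty (fun v => ((E.filter (fun e => v ∈ e)).card : ℝ)))) :
    (Finset.univ.sup' Finset.univ_nonempty x) ≥ (((Finset.univ.inf' Finset.univ_nonempty (fun v => ((E.filter (fun e => v ∈ e)).card : ℝ))) / (Finset.univ.sup' Finset.univ_nonempty (fun v => ((E.filter (fun e => v ∈ e)).card : ℝ)))) ^ ((k:ℝ) / (2 * ((k:ℝ) - 1))) + (Fintype.card V : ℝ) - 1) ^ (-(1:ℝ)/(k:ℝ)) := by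
  set d : V → ℝ := fun v => ((E.filter (fun e => v ∈ e)).card : ℝ) with hd
  set δ := Finset.univ.inf' Finset.univ_nonempty d with hδdef
  set Δ := Finset.univ.sup' Finset.univ_nonempty d with hΔdef
  set M := Finset.univ.sup' Finset.univ_nonempty x with hMdef
  set m := Finset.univ.inf' Finset.univ_nonempty x with hmdef
  obtain ⟨v0, -, hv0'⟩ := Finset.exists_mem_eq_inf' Finset.univ_nonempty x
  have hv0 : m = x v0 := hv0'
  have hmv : ∀ v, m ≤ x v := fun v => inf'_le _ (mem_univ v)
  have hvM : ∀ v, x v ≤ M := fun v => le_sup' _ (mem_univ v)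
  have hm0 : 0 < m := by rw [hv0]; exact hx v0
  have hM0 : 0 < M := hm0.trans_le ((hmv v0).trans (hvM v0))
  have hδΔ : δ ≤ Δ := (inf'_le d (mem_univ v0)).trans (le_sup' d (mem_univ v0))
  have hΔ0 : 0 < Δ := hδ.trans_le hδΔ
  have hk1 : 1 ≤ k := by omega
  have hprodM : ∀ v, ∀ e ∈ E.filter (fun e => v ∈ e), ∏ u ∈ e.erase v, x u ≤ M ^ (k-1) := by
    intro v e he
    rw [mem_filter] at he
    have hcard : (e.erase v).card = k - 1 := by
      rw [card_erase_of_mem he.2, hunif e he.1]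
    calc ∏ u ∈ e.erase v, x u ≤ ∏ u ∈ e.erase v, M :=
          prod_le_prod (fun u _ => (hx u).le) (fun u _ => hvM u)
      _ = M ^ (k-1) := by rw [prod_const, hcard]
  have hprodm : ∀ v, ∀ e ∈ E.filter (fun e => v ∈ e), m ^ (k-1) ≤ ∏ u ∈ e.erase v, x u := by
    intro v e he
    rw [mem_filter] at he
    have hcard : (e.erase v).card = k - 1 := by
      rw [card_erase_of_mem he.2, hunif e he.1]
    calc m ^ (k-1) = ∏ u ∈ e.erase v, m := by rw [prod_const, hcard]
      _ ≤ ∏ u ∈ e.erase v, x u := prod_le_prod (fun u _ => hm0.le) (fun u _ => hmv u)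
  obtain ⟨vδ, -, hvδ'⟩ := Finset.exists_mem_eq_inf' Finset.univ_nonempty d
  obtain ⟨vΔ, -, hvΔ'⟩ := Finset.exists_mem_eq_sup' Finset.univ_nonempty d
  have hvδ : δ = d vδ := hvδ'
  have hvΔ : Δ = d vΔ := hvΔ'
  have h1 : ρ * m ^ (k-1) ≤ δ * M ^ (k-1) := by
    have hs : ρ * x vδ ^ (k-1) ≤ δ * M ^ (k-1) := by
      rw [← heig vδ, hvδ]
      calc ∑ e ∈ E.filter (fun e => vδ ∈ e), ∏ u ∈ e.erase vδ, x u
          ≤ ∑ e ∈ E.filter (fun e => vδ ∈ e), M ^ (k-1) := sum_le_sum (hprodM vδ)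
        _ = d vδ * M ^ (k-1) := by rw [sum_const, nsmul_eq_mul]
    exact le_trans (mul_le_mul_of_nonneg_left
      (pow_le_pow_left₀ hm0.le (hmv vδ) _) hρ.le) hs
  have h2 : Δ * m ^ (k-1) ≤ ρ * M ^ (k-1) := by
    have hs : Δ * m ^ (k-1) ≤ ρ * x vΔ ^ (k-1) := by
      rw [← heig vΔ, hvΔ]
      calc d vΔ * m ^ (k-1)
          = ∑ e ∈ E.filter (fun e => vΔ ∈ e), m ^ (k-1) := by rw [sum_const, nsmul_eq_mul]
        _ ≤ _ := sum_le_sum (hprodm vΔ)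
    exact hs.trans (mul_le_mul_of_nonneg_left
      (pow_le_pow_left₀ (hx vΔ).le (hvM vΔ) _) hρ.le)
  have hpm : (0:ℝ) < m ^ (k-1) := pow_pos hm0 _
  have hpM : (0:ℝ) < M ^ (k-1) := pow_pos hM0 _
  have h3 : Δ * (m ^ (k-1))^2 ≤ δ * (M ^ (k-1))^2 := by
    nlinarith [mul_le_mul_of_nonneg_right h2 hpm.le, mul_le_mul_of_nonneg_right h1 hpM.le]
  set s : ℝ := m / M with hs
  have hs0 : 0 < s := div_pos hm0 hM0
  have hsr : s ^ (2*(k-1)) ≤ δ / Δ := by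
    rw [hs, div_pow, div_le_div_iff₀ (by positivity) hΔ0, mul_comm 2 (k-1), pow_mul, pow_mul]
    nlinarith [h3]
  set er : ℝ := (k:ℝ) / (2 * ((k:ℝ) - 1)) with her
  have hk2R : (2:ℝ) ≤ (k:ℝ) := by exact_mod_cast hk
  have hkR : (0:ℝ) < (k:ℝ) := by linarith
  have her0 : 0 ≤ er := by
    apply div_nonneg hkR.le; linarith
  have hsk : s ^ k ≤ (δ/Δ) ^ er := by
    have h := Real.rpow_le_rpow (by positivity) hsr her0
    rw [← Real.rpow_natCast s (2*(k-1)), ← Real.rpow_mul hs0.le] at h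
    have hcast : ((2*(k-1) : ℕ) : ℝ) = 2 * ((k:ℝ) - 1) := by
      push_cast [Nat.cast_sub hk1]; ring
    have hne : (2:ℝ) * ((k:ℝ) - 1) ≠ 0 := by nlinarith
    have hexp : ((2*(k-1) : ℕ) : ℝ) * er = (k:ℝ) := by
      rw [hcast, her]; field_simp; exact div_self (sub_pos.mpr (by linarith)).ne'
    rw [hexp, Real.rpow_natCast] at h
    exact h
  set r : ℝ := (δ/Δ) ^ er with hr
  have hr0 : 0 < r := Real.rpow_pos_of_pos (div_pos hδ hΔ0) _
  have hmk : m ^ k ≤ r * M ^ k := by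
    have h := mul_le_mul_of_nonneg_right hsk (by positivity : (0:ℝ) ≤ M ^ k)
    rwa [hs, div_pow, div_mul_cancel₀] at h
    positivity
  have hn1 : (1:ℝ) ≤ (Fintype.card V : ℝ) := by exact_mod_cast Fintype.card_pos
  have hsplit : ∑ v : V, x v ^ k ≤ m ^ k + ((Fintype.card V : ℝ) - 1) * M ^ k := by
    rw [← Finset.add_sum_erase _ _ (mem_univ v0)]
    have hA : x v0 ^ k = m ^ k := by rw [hv0]
    have hB : ∑ v ∈ Finset.univ.erase v0, x v ^ k ≤ ((Fintype.card V : ℝ) - 1) * M ^ k := by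
      calc ∑ v ∈ Finset.univ.erase v0, x v ^ k ≤ ∑ v ∈ Finset.univ.erase v0, M ^ k :=
            sum_le_sum (fun v _ => pow_le_pow_left₀ (hx v).le (hvM v) k)
        _ = ((Fintype.card V : ℝ) - 1) * M ^ k := by
            rw [sum_const, nsmul_eq_mul, card_erase_of_mem (mem_univ v0), card_univ]
            congr 1
            push_cast [Nat.cast_sub (by exact Fintype.card_pos : 1 ≤ Fintype.card V)]
            ring
    linarith
  set C : ℝ := r + (Fintype.card V : ℝ) - 1 with hC
  have hC0 : 0 < C := by rw [hC]; linarith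
  have hsum : (1:ℝ) ≤ C * M ^ k := by
    have e1 : r * M ^ k + ((Fintype.card V : ℝ) - 1) * M ^ k = C * M ^ k := by rw [hC]; ring
    linarith [hsplit, hnorm.ge, hmk, e1]
  have hCM : C⁻¹ ≤ M ^ k := by
    rw [inv_eq_one_div, div_le_iff₀ hC0]
    linarith [hsum, mul_comm C (M ^ k)]
  have hkne : (k:ℝ) ≠ 0 := hkR.ne'
  have key : (C⁻¹) ^ ((1:ℝ)/(k:ℝ)) ≤ M := by
    have h := Real.rpow_le_rpow (by positivity) hCM (by positivity : (0:ℝ) ≤ 1/(k:ℝ))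
    rwa [← Real.rpow_natCast M k, ← Real.rpow_mul hM0.le, mul_one_div, div_self hkne,
      Real.rpow_one] at h
  have hfin : C ^ (-(1:ℝ)/(k:ℝ)) = (C⁻¹) ^ ((1:ℝ)/(k:ℝ)) := by
    rw [Real.inv_rpow hC0.le, ← Real.rpow_neg hC0.le, neg_div]
  rw [ge_iff_le]
  calc C ^ (-(1:ℝ)/(k:ℝ)) = (C⁻¹) ^ ((1:ℝ)/(k:ℝ)) := hfin
    _ ≤ M := key
end

section
/- Let H be a k-uniform hypergraph on n vertices with principal eigenpair (ρ, x) normalized by ∑_v x_v^k = 1, maximum degree Δ and minimum degree δ > 0. Then x_min ≤ ( (Δ/δ)^{k/(2(k-1))} + n − 1 )^{-1/k}. -/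
open Finset

theorem stmt7 (V : Type*) [Fintype V] [DecidableEq V] [Nonempty V]
    (k : ℕ) (hk : 2 ≤ k)
    (E : Finset (Finset V))
    (hunif : ∀ e ∈ E, e.card = k)
    (x : V → ℝ) (hx : ∀ v, 0 < x v)
    (ρ : ℝ) (hρ : 0 < ρ)
    (heig : ∀ v : V, ∑ e ∈ E.filter (fun e => v ∈ e), ∏ u ∈ e.erase v, x u
      = ρ * x v ^ (k - 1))
    (hnorm : ∑ v : V, x v ^ k = 1)
    (hδ : 0 < (Finset.univ.inf' Finset.univ_nonempty (fun v => ((E.filter (fun e => v ∈ e)).card : ℝ)))) :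
    (Finset.univ.inf' Finset.univ_nonempty x) ≤ (((Finset.univ.sup' Finset.univ_nonempty (fun v => ((E.filter (fun e => v ∈ e)).card : ℝ))) / (Finset.univ.inf' Finset.univ_nonempty (fun v => ((E.filter (fun e => v ∈ e)).card : ℝ)))) ^ ((k:ℝ) / (2 * ((k:ℝ) - 1))) + (Fintype.card V : ℝ) - 1) ^ (-(1:ℝ)/(k:ℝ)) := by
  classical
  set d : V → ℝ := fun v => ((E.filter (fun e => v ∈ e)).card : ℝ) with hd
  set δ := Finset.univ.inf' Finset.univ_nonempty d with hδdef
  set Δ := Finset.univ.sup' Finset.univ_nonempty d with hΔdef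
  set m := Finset.univ.inf' Finset.univ_nonempty x with hmdef
  set M := Finset.univ.sup' Finset.univ_nonempty x with hMdef
  have hm : 0 < m := by
    obtain ⟨v, -, hv⟩ := Finset.exists_mem_eq_inf' Finset.univ_nonempty x
    rw [hmdef, hv]; exact hx v
  have hmle : ∀ v, m ≤ x v := fun v => Finset.inf'_le x (Finset.mem_univ v)
  have hMle : ∀ v, x v ≤ M := fun v => Finset.le_sup' x (Finset.mem_univ v)
  have hmM : m ≤ M := (hmle (Classical.arbitrary V)).trans (hMle _)
  have hM : 0 < M := lt_of_lt_of_le hm hmM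
  have hδle : ∀ v, δ ≤ d v := fun v => Finset.inf'_le d (Finset.mem_univ v)
  have hΔle : ∀ v, d v ≤ Δ := fun v => Finset.le_sup' d (Finset.mem_univ v)
  have hδΔ : δ ≤ Δ := (hδle (Classical.arbitrary V)).trans (hΔle _)
  have hΔ : 0 < Δ := lt_of_lt_of_le hδ hδΔ
  have hcard : ∀ e ∈ E, ∀ v ∈ e, (e.erase v).card = k - 1 := by
    intro e he v hv
    rw [Finset.card_erase_of_mem hv, hunif e he]
  have hprodlo : ∀ e ∈ E, ∀ v ∈ e, m ^ (k - 1) ≤ ∏ u ∈ e.erase v, x u := by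
    intro e he v hv
    calc m ^ (k - 1) = ∏ _u ∈ e.erase v, m := by
          rw [Finset.prod_const, hcard e he v hv]
      _ ≤ ∏ u ∈ e.erase v, x u :=
          Finset.prod_le_prod (fun _ _ => hm.le) (fun u _ => hmle u)
  have hprodhi : ∀ e ∈ E, ∀ v ∈ e, (∏ u ∈ e.erase v, x u) ≤ M ^ (k - 1) := by
    intro e he v hv
    calc (∏ u ∈ e.erase v, x u) ≤ ∏ _u ∈ e.erase v, M :=
          Finset.prod_le_prod (fun u _ => (hx u).le) (fun u _ => hMle u)
      _ = M ^ (k - 1) := by rw [Finset.prod_const, hcard e he v hv]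
  have hsumlo : ∀ v, d v * m ^ (k - 1) ≤ ρ * x v ^ (k - 1) := by
    intro v
    rw [← heig v]
    have := Finset.card_nsmul_le_sum (E.filter (fun e => v ∈ e))
      (fun e => ∏ u ∈ e.erase v, x u) (m ^ (k - 1)) ?_
    · simpa [nsmul_eq_mul, hd] using this
    · intro e he
      rw [Finset.mem_filter] at he
      exact hprodlo e he.1 v he.2
  have hsumhi : ∀ v, ρ * x v ^ (k - 1) ≤ d v * M ^ (k - 1) := by
    intro v
    rw [← heig v]
    have := Finset.sum_le_card_nsmul (E.filter (fun e => v ∈ e))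
      (fun e => ∏ u ∈ e.erase v, x u) (M ^ (k - 1)) ?_
    · simpa [nsmul_eq_mul, hd] using this
    · intro e he
      rw [Finset.mem_filter] at he
      exact hprodhi e he.1 v he.2
  obtain ⟨v₀, -, hv₀⟩ := Finset.exists_mem_eq_sup' Finset.univ_nonempty d
  obtain ⟨w₀, -, hw₀⟩ := Finset.exists_mem_eq_inf' Finset.univ_nonempty d
  have h1 : Δ * m ^ (k - 1) ≤ ρ * M ^ (k - 1) := by
    calc Δ * m ^ (k - 1) = d v₀ * m ^ (k - 1) := by rw [← hv₀]
      _ ≤ ρ * x v₀ ^ (k - 1) := hsumlo v₀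
      _ ≤ ρ * M ^ (k - 1) :=
          mul_le_mul_of_nonneg_left (pow_le_pow_left₀ (hx v₀).le (hMle v₀) _) hρ.le
  have h2 : ρ * m ^ (k - 1) ≤ δ * M ^ (k - 1) := by
    calc ρ * m ^ (k - 1) ≤ ρ * x w₀ ^ (k - 1) :=
          mul_le_mul_of_nonneg_left (pow_le_pow_left₀ hm.le (hmle w₀) _) hρ.le
      _ ≤ d w₀ * M ^ (k - 1) := hsumhi w₀
      _ = δ * M ^ (k - 1) := by rw [← hw₀]
  have hpow2 : ∀ y : ℝ, y ^ (2 * (k - 1)) = y ^ (k - 1) * y ^ (k - 1) := fun y => by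
    rw [two_mul, pow_add]
  have hkey : Δ * m ^ (2 * (k - 1)) ≤ δ * M ^ (2 * (k - 1)) := by
    rw [hpow2, hpow2]
    calc Δ * (m ^ (k - 1) * m ^ (k - 1)) = (Δ * m ^ (k - 1)) * m ^ (k - 1) := by ring
      _ ≤ (ρ * M ^ (k - 1)) * m ^ (k - 1) :=
          mul_le_mul_of_nonneg_right h1 (pow_nonneg hm.le _)
      _ = (ρ * m ^ (k - 1)) * M ^ (k - 1) := by ring
      _ ≤ (δ * M ^ (k - 1)) * M ^ (k - 1) :=
          mul_le_mul_of_nonneg_right h2 (pow_nonneg hM.le _)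
      _ = δ * (M ^ (k - 1) * M ^ (k - 1)) := by ring
  have hratio : Δ / δ ≤ (M / m) ^ (2 * (k - 1)) := by
    rw [div_pow, div_le_div_iff₀ hδ (pow_pos hm _)]
    calc Δ * m ^ (2 * (k - 1)) ≤ δ * M ^ (2 * (k - 1)) := hkey
      _ = M ^ (2 * (k - 1)) * δ := mul_comm _ _
  set r : ℝ := (k : ℝ) / (2 * ((k : ℝ) - 1)) with hrdef
  have hk2 : (2 : ℝ) ≤ (k : ℝ) := by exact_mod_cast hk
  have hden : (0 : ℝ) < 2 * ((k : ℝ) - 1) := by linarith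
  have hr : 0 ≤ r := div_nonneg (by positivity) hden.le
  have hstep : (Δ / δ) ^ r ≤ (M / m) ^ k := by
    have h5 : (Δ / δ) ^ r ≤ ((M / m) ^ (2 * (k - 1))) ^ r :=
      Real.rpow_le_rpow (by positivity) hratio hr
    have hRHS : ((M / m) ^ (2 * (k - 1))) ^ r = (M / m) ^ k := by
      rw [← Real.rpow_natCast (M / m) (2 * (k - 1)), ← Real.rpow_mul (by positivity),
        ← Real.rpow_natCast (M / m) k]
      congr 1
      have hc : ((2 * (k - 1) : ℕ) : ℝ) = 2 * ((k : ℝ) - 1) := by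
        push_cast [Nat.cast_sub (by omega : 1 ≤ k)]
        ring
      rw [hc, hrdef, mul_div_cancel₀ _ hden.ne']
    rwa [hRHS] at h5
  obtain ⟨vM, -, hvM⟩ := Finset.exists_mem_eq_sup' Finset.univ_nonempty x
  have hn1 : 1 ≤ Fintype.card V := Fintype.card_pos
  have herase : ((Fintype.card V : ℝ) - 1) * m ^ k ≤ ∑ v ∈ Finset.univ.erase vM, x v ^ k := by
    have h6 := Finset.card_nsmul_le_sum (Finset.univ.erase vM) (fun v => x v ^ k) (m ^ k)
      (fun v _ => pow_le_pow_left₀ hm.le (hmle v) k)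
    have hc : (((Finset.univ.erase vM).card : ℕ) : ℝ) = (Fintype.card V : ℝ) - 1 := by
      rw [Finset.card_erase_of_mem (Finset.mem_univ vM), Finset.card_univ,
        Nat.cast_sub hn1]
      norm_num
    rw [nsmul_eq_mul, hc] at h6
    exact h6
  have hsum : M ^ k + ((Fintype.card V : ℝ) - 1) * m ^ k ≤ 1 := by
    have h9 : M ^ k + ((Fintype.card V : ℝ) - 1) * m ^ k ≤ ∑ v : V, x v ^ k := by
      rw [← Finset.add_sum_erase Finset.univ (fun v => x v ^ k) (Finset.mem_univ vM)]
      exact add_le_add (le_of_eq (by rw [hMdef, hvM])) herase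
    rwa [hnorm] at h9
  set C : ℝ := (Δ / δ) ^ r + (Fintype.card V : ℝ) - 1 with hCdef
  have hC1 : 1 ≤ (Δ / δ) ^ r := by
    rw [← Real.one_rpow r]
    exact Real.rpow_le_rpow zero_le_one ((one_le_div hδ).mpr hδΔ) hr
  have hCpos : 0 < C := by
    have : (1 : ℝ) ≤ (Fintype.card V : ℝ) := by exact_mod_cast hn1
    rw [hCdef]; linarith
  have hCsum : C * m ^ k ≤ 1 := by
    have h3 : (Δ / δ) ^ r * m ^ k ≤ M ^ k := by
      calc (Δ / δ) ^ r * m ^ k ≤ (M / m) ^ k * m ^ k :=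
            mul_le_mul_of_nonneg_right hstep (pow_nonneg hm.le k)
        _ = M ^ k := by rw [div_pow]; field_simp
    calc C * m ^ k = (Δ / δ) ^ r * m ^ k + ((Fintype.card V : ℝ) - 1) * m ^ k := by
          rw [hCdef]; ring
      _ ≤ M ^ k + ((Fintype.card V : ℝ) - 1) * m ^ k := add_le_add_left h3 _
      _ ≤ 1 := hsum
  have hkR : (0 : ℝ) < (k : ℝ) := by positivity
  have hmk : m ^ k ≤ C⁻¹ := by
    have h8 := mul_le_mul_of_nonneg_left hCsum (inv_nonneg.mpr hCpos.le)
    rwa [← mul_assoc, inv_mul_cancel₀ hCpos.ne', one_mul, mul_one] at h8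
  have h7 : ((m ^ k : ℝ)) ^ ((1 : ℝ) / (k : ℝ)) ≤ (C⁻¹) ^ ((1 : ℝ) / (k : ℝ)) :=
    Real.rpow_le_rpow (pow_nonneg hm.le k) hmk (by positivity)
  have hml : ((m ^ k : ℝ)) ^ ((1 : ℝ) / (k : ℝ)) = m := by
    rw [← Real.rpow_natCast m k, ← Real.rpow_mul hm.le, mul_one_div,
      div_self hkR.ne', Real.rpow_one]
  have hCr : (C⁻¹) ^ ((1 : ℝ) / (k : ℝ)) = C ^ (-(1 : ℝ) / (k : ℝ)) := by
    rw [Real.inv_rpow hCpos.le, ← Real.rpow_neg hCpos.le, neg_div]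
  rw [hml, hCr] at h7
  exact h7
end

section
/- Let H be a k-uniform hypergraph with principal eigenpair (ρ, x) normalized by ∑_v x_v^k = 1, ρ > 0. Then x_max ≥ ρ^{1/(k-1)} / ( ∑_{v∈V} d(v)^{k/(k-1)} )^{1/k}. -/
open Finset

theorem stmt9 (V : Type*) [Fintype V] [DecidableEq V] [Nonempty V]
    (k : ℕ) (hk : 2 ≤ k)
    (E : Finset (Finset V))
    (hunif : ∀ e ∈ E, e.card = k)
    (x : V → ℝ) (hx : ∀ v, 0 < x v)
    (ρ : ℝ) (hρ : 0 < ρ)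
    (heig : ∀ v : V, ∑ e ∈ E.filter (fun e => v ∈ e), ∏ u ∈ e.erase v, x u
      = ρ * x v ^ (k - 1))
    (hnorm : ∑ v : V, x v ^ k = 1) :
    (Finset.univ.sup' Finset.univ_nonempty x) ≥ ρ ^ ((1:ℝ)/((k:ℝ) - 1))
      / (∑ v : V, ((E.filter (fun e => v ∈ e)).card : ℝ) ^ ((k:ℝ)/((k:ℝ) - 1))) ^ ((1:ℝ)/(k:ℝ)) := by
  set M := Finset.univ.sup' Finset.univ_nonempty x with hMdef
  have hMle : ∀ v, x v ≤ M := fun v => Finset.le_sup' x (Finset.mem_univ v)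
  obtain ⟨v0⟩ := ‹Nonempty V›
  have hMpos : 0 < M := lt_of_lt_of_le (hx v0) (hMle v0)
  have hk2 : (2:ℝ) ≤ (k:ℝ) := by exact_mod_cast hk
  have hk0 : (k:ℝ) ≠ 0 := by positivity
  set t : ℝ := (k:ℝ) - 1 with hT
  have htpos : 0 < t := by rw [hT]; linarith
  have hcast : ((k - 1 : ℕ) : ℝ) = t := by
    rw [hT, Nat.cast_sub (by omega : 1 ≤ k)]; norm_num
  set d : V → ℝ := fun v => ((E.filter (fun e => v ∈ e)).card : ℝ) with hd
  have hdnn : ∀ v, 0 ≤ d v := fun v => Nat.cast_nonneg _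
  have key : ∀ v, ρ * x v ^ (k-1) ≤ d v * M ^ (k-1) := by
    intro v
    rw [← heig v]
    calc ∑ e ∈ E.filter (fun e => v ∈ e), ∏ u ∈ e.erase v, x u
        ≤ ∑ _e ∈ E.filter (fun e => v ∈ e), M ^ (k-1) := by
          apply Finset.sum_le_sum
          intro e he
          rw [Finset.mem_filter] at he
          have hcard : (e.erase v).card = k - 1 := by
            rw [Finset.card_erase_of_mem he.2, hunif e he.1]
          calc ∏ u ∈ e.erase v, x u ≤ ∏ _u ∈ e.erase v, M :=
                Finset.prod_le_prod (fun u _ => (hx u).le) (fun u _ => hMle u)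
            _ = M ^ (k-1) := by rw [Finset.prod_const, hcard]
      _ = d v * M ^ (k-1) := by rw [Finset.sum_const, nsmul_eq_mul]
  have hxv : ∀ v, x v ≤ (d v / ρ) ^ ((1:ℝ)/t) * M := by
    intro v
    have h1 : x v ^ (k-1) ≤ (d v / ρ) * M ^ (k-1) := by
      rw [div_mul_eq_mul_div, le_div_iff₀ hρ]
      linarith [key v]
    have h2 : (x v ^ (k-1) : ℝ) = (x v) ^ (t : ℝ) := by
      rw [← Real.rpow_natCast (x v) (k-1), hcast]
    have h3 : (M ^ (k-1) : ℝ) = M ^ (t : ℝ) := by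
      rw [← Real.rpow_natCast M (k-1), hcast]
    rw [h2, h3] at h1
    have h4 := Real.rpow_le_rpow (Real.rpow_nonneg (hx v).le t) h1
      (by positivity : (0:ℝ) ≤ 1/t)
    calc x v = (x v ^ (t:ℝ)) ^ ((1:ℝ)/t) := by
          rw [← Real.rpow_mul (hx v).le, mul_one_div, div_self htpos.ne', Real.rpow_one]
      _ ≤ ((d v / ρ) * M ^ (t:ℝ)) ^ ((1:ℝ)/t) := h4
      _ = (d v / ρ) ^ ((1:ℝ)/t) * M := by
          rw [Real.mul_rpow (div_nonneg (hdnn v) hρ.le) (Real.rpow_nonneg hMpos.le t),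
            ← Real.rpow_mul hMpos.le, mul_one_div, div_self htpos.ne', Real.rpow_one]
  have hxk : ∀ v, x v ^ k ≤ (d v / ρ) ^ ((k:ℝ)/t) * M ^ k := by
    intro v
    have h5 := pow_le_pow_left₀ (hx v).le (hxv v) k
    rw [mul_pow] at h5
    refine h5.trans_eq ?_
    congr 1
    rw [← Real.rpow_natCast ((d v / ρ) ^ ((1:ℝ)/t)) k,
      ← Real.rpow_mul (div_nonneg (hdnn v) hρ.le), one_div_mul_eq_div]
  set S : ℝ := ∑ v : V, d v ^ ((k:ℝ)/t) with hS
  have hsum : (1:ℝ) ≤ S / ρ ^ ((k:ℝ)/t) * M ^ k := by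
    rw [← hnorm]
    calc ∑ v : V, x v ^ k ≤ ∑ v : V, (d v / ρ) ^ ((k:ℝ)/t) * M ^ k :=
          Finset.sum_le_sum (fun v _ => hxk v)
      _ = S / ρ ^ ((k:ℝ)/t) * M ^ k := by
          rw [← Finset.sum_mul]
          congr 1
          calc ∑ v : V, (d v / ρ) ^ ((k:ℝ)/t)
              = ∑ v : V, d v ^ ((k:ℝ)/t) / ρ ^ ((k:ℝ)/t) :=
                Finset.sum_congr rfl (fun v _ => Real.div_rpow (hdnn v) hρ.le _)
            _ = S / ρ ^ ((k:ℝ)/t) := by rw [hS, Finset.sum_div]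
  have hρe : (0:ℝ) < ρ ^ ((k:ℝ)/t) := Real.rpow_pos_of_pos hρ _
  have hρS : ρ ^ ((k:ℝ)/t) ≤ S * M ^ k := by
    have := mul_le_mul_of_nonneg_left hsum hρe.le
    rw [mul_one, ← mul_assoc, mul_div_cancel₀ _ hρe.ne'] at this
    linarith [this]
  have hSpos : 0 < S := by
    have hMk : (0:ℝ) < M ^ k := pow_pos hMpos k
    nlinarith
  have hSk : (0:ℝ) < S ^ ((1:ℝ)/(k:ℝ)) := Real.rpow_pos_of_pos hSpos _
  rw [ge_iff_le, div_le_iff₀ hSk]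
  calc ρ ^ ((1:ℝ)/t) = (ρ ^ ((k:ℝ)/t)) ^ ((1:ℝ)/(k:ℝ)) := by
        rw [← Real.rpow_mul hρ.le]
        congr 1
        field_simp
    _ ≤ (S * M ^ k) ^ ((1:ℝ)/(k:ℝ)) :=
        Real.rpow_le_rpow hρe.le hρS (by positivity)
    _ = S ^ ((1:ℝ)/(k:ℝ)) * M := by
        rw [Real.mul_rpow hSpos.le (pow_pos hMpos k).le,
          ← Real.rpow_natCast M k, ← Real.rpow_mul hMpos.le, mul_one_div,
          div_self hk0, Real.rpow_one]
    _ = M * S ^ ((1:ℝ)/(k:ℝ)) := mul_comm _ _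
end

section
/- Let H be a k-uniform hypergraph on n vertices with principal eigenpair (ρ, x) normalized by ∑_v x_v^k = 1, minimum degree δ > 0. Then x_min ≤ ( δ / (ρ + δ(n−1)) )^{1/k}. -/
open Finset

lemma amgm_pow {ι : Type*} (s : Finset ι) (k : ℕ) (hk : 0 < k) (hcard : s.card = k)
    (x : ι → ℝ) (hx : ∀ i ∈ s, 0 ≤ x i) :
    ∏ i ∈ s, x i ≤ (1 / (k : ℝ)) * ∑ i ∈ s, x i ^ k := by
  have hk' : (k : ℝ) ≠ 0 := Nat.cast_ne_zero.mpr hk.ne'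
  have h := Real.geom_mean_le_arith_mean_weighted s (fun _ => 1 / (k : ℝ))
      (fun i => x i ^ k) (fun i _ => by positivity)
      (by simp [hcard]; field_simp)
      (fun i hi => pow_nonneg (hx i hi) k)
  have hL : ∏ i ∈ s, (x i ^ k) ^ ((1 : ℝ) / (k : ℝ)) = ∏ i ∈ s, x i := by
    refine Finset.prod_congr rfl fun i hi => ?_
    rw [one_div]
    exact Real.pow_rpow_inv_natCast (hx i hi) hk.ne'
  rw [hL] at h
  simpa [Finset.mul_sum] using h

theorem stmt10 (V : Type*) [Fintype V] [DecidableEq V] [Nonempty V]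
    (k : ℕ) (hk : 2 ≤ k)
    (E : Finset (Finset V))
    (hunif : ∀ e ∈ E, e.card = k)
    (x : V → ℝ) (hx : ∀ v, 0 < x v)
    (ρ : ℝ) (hρ : 0 < ρ)
    (heig : ∀ v : V, ∑ e ∈ E.filter (fun e => v ∈ e), ∏ u ∈ e.erase v, x u
      = ρ * x v ^ (k - 1))
    (hnorm : ∑ v : V, x v ^ k = 1)
    (hδ : 0 < (Finset.univ.inf' Finset.univ_nonempty (fun v => ((E.filter (fun e => v ∈ e)).card : ℝ)))) :
    (Finset.univ.inf' Finset.univ_nonempty x) ≤ ((Finset.univ.inf' Finset.univ_nonempty (fun v => ((E.filter (fun e => v ∈ e)).card : ℝ))) / (ρ + (Finset.univ.inf' Finset.univ_nonempty (fun v => ((E.filter (fun e => v ∈ e)).card : ℝ))) * ((Fintype.card V : ℝ) - 1))) ^ ((1:ℝ)/(k:ℝ)) := by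
  have hkpos : 0 < k := lt_of_lt_of_le two_pos hk
  set δ : ℝ := Finset.univ.inf' Finset.univ_nonempty (fun v => ((E.filter (fun e => v ∈ e)).card : ℝ)) with hδdef
  set m : ℝ := Finset.univ.inf' Finset.univ_nonempty x with hmdef
  have hmle : ∀ v, m ≤ x v := fun v => Finset.inf'_le x (Finset.mem_univ v)
  have hδle : ∀ v, δ ≤ ((E.filter (fun e => v ∈ e)).card : ℝ) :=
    fun v => Finset.inf'_le _ (Finset.mem_univ v)
  obtain ⟨w', -, hw'⟩ := Finset.exists_mem_eq_inf' (Finset.univ_nonempty (α := V)) x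
  rw [← hmdef] at hw'
  have hmpos : 0 < m := hw' ▸ hx w'
  -- Step 1 : δ ≤ ρ
  have hρδ : δ ≤ ρ := by
    have hterm : ∀ e ∈ E.filter (fun e => w' ∈ e), m ^ (k-1) ≤ ∏ u ∈ e.erase w', x u := by
      intro e he
      rw [Finset.mem_filter] at he
      have hcard : (e.erase w').card = k - 1 := by
        rw [Finset.card_erase_of_mem he.2, hunif e he.1]
      calc m ^ (k-1) = ∏ _u ∈ e.erase w', m := by rw [Finset.prod_const, hcard]
        _ ≤ ∏ u ∈ e.erase w', x u :=
          Finset.prod_le_prod (fun _ _ => hmpos.le) (fun u _ => hmle u)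
    have hsum : ((E.filter (fun e => w' ∈ e)).card : ℝ) * m ^ (k-1) ≤ ρ * m ^ (k-1) := by
      calc ((E.filter (fun e => w' ∈ e)).card : ℝ) * m ^ (k-1)
          = ∑ _e ∈ E.filter (fun e => w' ∈ e), m ^ (k-1) := by
            rw [Finset.sum_const, nsmul_eq_mul]
        _ ≤ ∑ e ∈ E.filter (fun e => w' ∈ e), ∏ u ∈ e.erase w', x u :=
            Finset.sum_le_sum hterm
        _ = ρ * x w' ^ (k-1) := heig w'
        _ = ρ * m ^ (k-1) := by rw [← hw']
    exact le_trans (hδle w') (le_of_mul_le_mul_right hsum (pow_pos hmpos (k-1)))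
  -- vertex of minimum degree
  obtain ⟨w, -, hwdeg⟩ := Finset.exists_mem_eq_inf' (Finset.univ_nonempty (α := V))
    (fun v => ((E.filter (fun e => v ∈ e)).card : ℝ))
  rw [← hδdef] at hwdeg
  -- there is an edge, hence k ≤ n
  have hfilne : (E.filter (fun e => w ∈ e)).Nonempty := by
    rw [← Finset.card_pos]
    by_contra h
    push_neg at h
    interval_cases h' : (E.filter (fun e => w ∈ e)).card
    · rw [hwdeg] at hδ; simp [h'] at hδ
  obtain ⟨e₀, he₀⟩ := hfilne
  have hkn : k ≤ Fintype.card V := by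
    rw [Finset.mem_filter] at he₀
    rw [← hunif e₀ he₀.1]
    exact Finset.card_le_card (Finset.subset_univ e₀)
  -- Step 2
  have hk1 : k - 1 + 1 = k := Nat.sub_add_cancel (le_trans one_le_two hk)
  have heq2 : ρ * x w ^ k = ∑ e ∈ E.filter (fun e => w ∈ e), ∏ u ∈ e, x u := by
    calc ρ * x w ^ k = (ρ * x w ^ (k-1)) * x w := by
          rw [mul_assoc, ← pow_succ, hk1]
      _ = (∑ e ∈ E.filter (fun e => w ∈ e), ∏ u ∈ e.erase w, x u) * x w := by rw [heig w]
      _ = ∑ e ∈ E.filter (fun e => w ∈ e), x w * ∏ u ∈ e.erase w, x u := by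
          rw [Finset.sum_mul]; exact Finset.sum_congr rfl fun e _ => mul_comm _ _
      _ = ∑ e ∈ E.filter (fun e => w ∈ e), ∏ u ∈ e, x u := by
          refine Finset.sum_congr rfl fun e he => ?_
          rw [Finset.mem_filter] at he
          exact Finset.mul_prod_erase e x he.2
  have hbound : ∀ e ∈ E.filter (fun e => w ∈ e),
      ∏ u ∈ e, x u ≤ (1 / (k:ℝ)) * (1 - ((Fintype.card V : ℝ) - k) * m ^ k) := by
    intro e he
    rw [Finset.mem_filter] at he
    have h1 : ∏ u ∈ e, x u ≤ (1 / (k:ℝ)) * ∑ u ∈ e, x u ^ k :=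
      amgm_pow e k hkpos (hunif e he.1) x (fun u _ => (hx u).le)
    have h2 : ∑ u ∈ e, x u ^ k ≤ 1 - ((Fintype.card V : ℝ) - k) * m ^ k := by
      have hsplit : ∑ u ∈ Finset.univ \ e, x u ^ k + ∑ u ∈ e, x u ^ k = 1 := by
        rw [Finset.sum_sdiff (Finset.subset_univ e)]
        exact hnorm
      have hcompl : ((Fintype.card V : ℝ) - k) * m ^ k ≤ ∑ u ∈ Finset.univ \ e, x u ^ k := by
        have hcard : ((Finset.univ \ e).card : ℝ) = (Fintype.card V : ℝ) - k := by
          rw [Finset.card_sdiff_of_subset (Finset.subset_univ e), Finset.card_univ, hunif e he.1,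
            Nat.cast_sub hkn]
        calc ((Fintype.card V : ℝ) - k) * m ^ k
            = ∑ _u ∈ Finset.univ \ e, m ^ k := by
              rw [Finset.sum_const, nsmul_eq_mul, hcard]
          _ ≤ ∑ u ∈ Finset.univ \ e, x u ^ k :=
              Finset.sum_le_sum fun u _ => pow_le_pow_left₀ hmpos.le (hmle u) k
      linarith
    calc ∏ u ∈ e, x u ≤ (1 / (k:ℝ)) * ∑ u ∈ e, x u ^ k := h1
      _ ≤ (1 / (k:ℝ)) * (1 - ((Fintype.card V : ℝ) - k) * m ^ k) := by
          apply mul_le_mul_of_nonneg_left h2; positivity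
  have hmain : ρ * m ^ k ≤ (δ / k) * (1 - ((Fintype.card V : ℝ) - k) * m ^ k) := by
    calc ρ * m ^ k ≤ ρ * x w ^ k := by
          apply mul_le_mul_of_nonneg_left (pow_le_pow_left₀ hmpos.le (hmle w) k) hρ.le
      _ = ∑ e ∈ E.filter (fun e => w ∈ e), ∏ u ∈ e, x u := heq2
      _ ≤ ∑ _e ∈ E.filter (fun e => w ∈ e),
            (1 / (k:ℝ)) * (1 - ((Fintype.card V : ℝ) - k) * m ^ k) :=
          Finset.sum_le_sum hbound
      _ = (δ / k) * (1 - ((Fintype.card V : ℝ) - k) * m ^ k) := by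
          rw [Finset.sum_const, nsmul_eq_mul, ← hwdeg]; ring
  -- algebra
  have hn1 : (1:ℝ) ≤ (Fintype.card V : ℝ) := by
    exact_mod_cast Fintype.card_pos
  have hk2 : (2:ℝ) ≤ (k:ℝ) := by exact_mod_cast hk
  have hkR : (0:ℝ) < (k:ℝ) := by exact_mod_cast hkpos
  have hden : 0 < ρ + δ * ((Fintype.card V : ℝ) - 1) := by nlinarith
  have hmk : m ^ k ≤ δ / (ρ + δ * ((Fintype.card V : ℝ) - 1)) := by
    rw [le_div_iff₀ hden]
    have hmk0 : 0 < m ^ k := pow_pos hmpos k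
    have hmain' : ρ * m ^ k * (k:ℝ) ≤ δ * (1 - ((Fintype.card V : ℝ) - k) * m ^ k) := by
      rw [div_mul_eq_mul_div, le_div_iff₀ hkR] at hmain
      linarith
    have h1 : m ^ k * ((k:ℝ) * ρ + δ * ((Fintype.card V : ℝ) - k)) ≤ δ := by nlinarith
    nlinarith [mul_nonneg (mul_nonneg hmk0.le (sub_nonneg.mpr hρδ)) (by linarith : (0:ℝ) ≤ (k:ℝ) - 1)]
  calc m = (m ^ k) ^ ((1:ℝ)/(k:ℝ)) := by
        rw [one_div, Real.pow_rpow_inv_natCast hmpos.le hkpos.ne']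
    _ ≤ (δ / (ρ + δ * ((Fintype.card V : ℝ) - 1))) ^ ((1:ℝ)/(k:ℝ)) :=
        Real.rpow_le_rpow (pow_nonneg hmpos.le k) hmk (by positivity)
end

section
/- Let H be a k-uniform hypergraph on n vertices with principal eigenpair (ρ, x) normalized by ∑_v x_v^k = 1, minimum degree δ > 0. Equality x_min = (δ/(ρ + δ(n−1)))^{1/k} holds if and only if there exists a vertex v such that x_w = x_min for all w ≠ v and x_v = (ρ/δ)^{1/k} · x_min. -/
open Finset

theorem stmt11 (V : Type*) [Fintype V] [DecidableEq V] [Nonempty V]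
    (k : ℕ) (hk : 2 ≤ k)
    (E : Finset (Finset V))
    (hunif : ∀ e ∈ E, e.card = k)
    (x : V → ℝ) (hx : ∀ v, 0 < x v)
    (ρ : ℝ) (hρ : 0 < ρ)
    (heig : ∀ v : V, ∑ e ∈ E.filter (fun e => v ∈ e), ∏ u ∈ e.erase v, x u
      = ρ * x v ^ (k - 1))
    (hnorm : ∑ v : V, x v ^ k = 1)
    (hδ : 0 < (Finset.univ.inf' Finset.univ_nonempty (fun v => ((E.filter (fun e => v ∈ e)).card : ℝ)))) :
    (Finset.univ.inf' Finset.univ_nonempty x) = ((Finset.univ.inf' Finset.univ_nonempty (fun v => ((E.filter (fun e => v ∈ e)).card : ℝ))) / (ρ + (Finset.univ.inf' Finset.univ_nonempty (fun v => ((E.filter (fun e => v ∈ e)).card : ℝ))) * ((Fintype.card V : ℝ) - 1))) ^ ((1:ℝ)/(k:ℝ)) ↔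
      ∃ v : V, (∀ w : V, w ≠ v → x w = (Finset.univ.inf' Finset.univ_nonempty x)) ∧
        x v = (ρ / (Finset.univ.inf' Finset.univ_nonempty (fun v => ((E.filter (fun e => v ∈ e)).card : ℝ)))) ^ ((1:ℝ)/(k:ℝ)) * (Finset.univ.inf' Finset.univ_nonempty x) := by
  set δ := (Finset.univ.inf' Finset.univ_nonempty (fun v => ((E.filter (fun e => v ∈ e)).card : ℝ))) with hδdef
  set m := Finset.univ.inf' Finset.univ_nonempty x with hmdef
  obtain ⟨vm, -, hvm⟩ := Finset.exists_mem_eq_inf' Finset.univ_nonempty x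
  have hm0 : 0 < m := by rw [hmdef, hvm]; exact hx vm
  have hmle : ∀ w, m ≤ x w := fun w => Finset.inf'_le _ (mem_univ w)
  have hn1 : (1:ℝ) ≤ (Fintype.card V : ℝ) := by exact_mod_cast Fintype.card_pos
  have hD : 0 < ρ + δ * ((Fintype.card V : ℝ) - 1) :=
    add_pos_of_pos_of_nonneg hρ (mul_nonneg hδ.le (by linarith))
  have hk0 : (k:ℝ) ≠ 0 := by positivity
  have key : ∀ a : ℝ, 0 < a → (a ^ ((1:ℝ)/(k:ℝ))) ^ k = a := by
    intro a ha
    rw [← Real.rpow_natCast (a ^ ((1:ℝ)/(k:ℝ))), ← Real.rpow_mul ha.le, one_div,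
      inv_mul_cancel₀ hk0, Real.rpow_one]
  have key2 : ∀ a : ℝ, 0 < a → (a ^ k) ^ ((1:ℝ)/(k:ℝ)) = a := by
    intro a ha
    rw [← Real.rpow_natCast a k, ← Real.rpow_mul ha.le, mul_one_div, div_self hk0,
      Real.rpow_one]
  constructor
  · -- forward
    intro h
    have hSk : m ^ k = δ / (ρ + δ * ((Fintype.card V : ℝ) - 1)) := by
      rw [h, key _ (div_pos hδ hD)]
    have hEq : ρ * m ^ k + δ * ((Fintype.card V : ℝ) - 1) * m ^ k = δ := by
      have : m ^ k * (ρ + δ * ((Fintype.card V : ℝ) - 1)) = δ := by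
        rw [hSk, div_mul_cancel₀ _ hD.ne']
      linarith [this]
    set M := Finset.univ.sup' Finset.univ_nonempty x with hMdef
    obtain ⟨vM, -, hvM⟩ := Finset.exists_mem_eq_sup' Finset.univ_nonempty x
    have hleM : ∀ w, x w ≤ M := fun w => Finset.le_sup' _ (mem_univ w)
    have hM0 : 0 < M := by rw [hMdef, hvM]; exact hx vM
    have hmM : m ≤ M := by rw [hMdef, hvM]; exact hmle vM
    obtain ⟨v0, -, hv0⟩ := Finset.exists_mem_eq_inf' Finset.univ_nonempty
      (fun v => ((E.filter (fun e => v ∈ e)).card : ℝ))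
    -- A : ρ m^{k-1} ≤ δ M^{k-1}
    have hA : ρ * m ^ (k-1) ≤ δ * M ^ (k-1) := by
      have h1 : ρ * m ^ (k-1) ≤ ρ * (x v0) ^ (k-1) :=
        mul_le_mul_of_nonneg_left (pow_le_pow_left₀ hm0.le (hmle v0) _) hρ.le
      have h3 : ∑ e ∈ E.filter (fun e => v0 ∈ e), ∏ u ∈ e.erase v0, x u
          ≤ ((E.filter (fun e => v0 ∈ e)).card : ℝ) * M ^ (k-1) := by
        calc ∑ e ∈ E.filter (fun e => v0 ∈ e), ∏ u ∈ e.erase v0, x u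
            ≤ ∑ e ∈ E.filter (fun e => v0 ∈ e), M ^ (k-1) := by
              refine Finset.sum_le_sum fun e he => ?_
              have hve : v0 ∈ e := (mem_filter.mp he).2
              have hce : (e.erase v0).card = k - 1 := by
                rw [card_erase_of_mem hve, hunif e (mem_filter.mp he).1]
              calc ∏ u ∈ e.erase v0, x u ≤ ∏ u ∈ e.erase v0, M :=
                    Finset.prod_le_prod (fun u _ => (hx u).le) (fun u _ => hleM u)
                _ = M ^ (k-1) := by rw [Finset.prod_const, hce]
          _ = ((E.filter (fun e => v0 ∈ e)).card : ℝ) * M ^ (k-1) := by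
              rw [Finset.sum_const, nsmul_eq_mul]
      rw [heig v0] at h3
      rw [← hv0] at h3
      linarith
    have hpow : m ^ k = m ^ (k-1) * m := by
      conv_lhs => rw [show k = (k-1) + 1 by omega]
      rw [pow_succ]
    have hpowM : M ^ k = M ^ (k-1) * M := by
      conv_lhs => rw [show k = (k-1) + 1 by omega]
      rw [pow_succ]
    have hchain1 : ρ * m ^ k ≤ δ * (M ^ (k-1) * m) := by
      rw [hpow]
      calc ρ * (m ^ (k-1) * m) = (ρ * m ^ (k-1)) * m := by ring
        _ ≤ (δ * M ^ (k-1)) * m := mul_le_mul_of_nonneg_right hA hm0.le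
        _ = δ * (M ^ (k-1) * m) := by ring
    have hchain2 : δ * (M ^ (k-1) * m) ≤ δ * M ^ k := by
      rw [hpowM]
      have : M ^ (k-1) * m ≤ M ^ (k-1) * M :=
        mul_le_mul_of_nonneg_left hmM (pow_nonneg hM0.le _)
      nlinarith
    have hC : M ^ k + ((Fintype.card V : ℝ) - 1) * m ^ k ≤ 1 := by
      have hsplit : x vM ^ k + ∑ w ∈ Finset.univ.erase vM, x w ^ k = 1 :=
        (Finset.add_sum_erase Finset.univ (fun w => x w ^ k) (mem_univ vM)).trans hnorm
      have h4 : ((Fintype.card V : ℝ) - 1) * m ^ k ≤ ∑ w ∈ Finset.univ.erase vM, x w ^ k := by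
        have h5 : ∑ w ∈ Finset.univ.erase vM, m ^ k ≤ ∑ w ∈ Finset.univ.erase vM, x w ^ k :=
          Finset.sum_le_sum fun w _ => pow_le_pow_left₀ hm0.le (hmle w) _
        have h6 : ∑ w ∈ Finset.univ.erase vM, m ^ k
            = ((Fintype.card V : ℝ) - 1) * m ^ k := by
          rw [Finset.sum_const, nsmul_eq_mul, Finset.card_erase_of_mem (mem_univ vM),
            Finset.card_univ, Nat.cast_sub Fintype.card_pos, Nat.cast_one]
        linarith
      have h7 : M ^ k = x vM ^ k := by rw [hMdef, hvM]
      linarith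
    -- equality forces M = m
    have hMm : M = m := by
      have h8 : δ * (M ^ (k-1) * m) = δ * M ^ k := by nlinarith
      have h9 : M ^ (k-1) * m = M ^ (k-1) * M := by
        have := mul_left_cancel₀ hδ.ne' (h8.trans (by rw [hpowM]))
        linarith [this]
      exact (mul_left_cancel₀ (pow_pos hM0 (k-1)).ne' h9).symm
    have hconst : ∀ w, x w = m := fun w => le_antisymm (hMm ▸ hleM w) (hmle w)
    have hρδ : ρ = δ := by
      have he := heig v0
      have hprod : ∀ e ∈ E.filter (fun e => v0 ∈ e), ∏ u ∈ e.erase v0, x u = m ^ (k-1) := by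
        intro e he'
        have hve : v0 ∈ e := (mem_filter.mp he').2
        rw [Finset.prod_congr rfl (fun u _ => hconst u), Finset.prod_const,
          card_erase_of_mem hve, hunif e (mem_filter.mp he').1]
      rw [Finset.sum_congr rfl hprod, Finset.sum_const, nsmul_eq_mul, ← hv0,
        hconst v0] at he
      exact (mul_right_cancel₀ (pow_pos hm0 (k-1)).ne' he).symm
    refine ⟨Classical.arbitrary V, fun w _ => hconst w, ?_⟩
    rw [hρδ, div_self hδ.ne', Real.one_rpow, one_mul, hconst]
  · -- backward
    rintro ⟨v, hw, hv⟩
    have hxvk : x v ^ k = (ρ / δ) * m ^ k := by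
      rw [hv, mul_pow, key _ (div_pos hρ hδ)]
    have hsum : (1:ℝ) = (ρ / δ) * m ^ k + ((Fintype.card V : ℝ) - 1) * m ^ k := by
      have hsplit : x v ^ k + ∑ w ∈ Finset.univ.erase v, x w ^ k = 1 :=
        (Finset.add_sum_erase Finset.univ (fun w => x w ^ k) (mem_univ v)).trans hnorm
      have h6 : ∑ w ∈ Finset.univ.erase v, x w ^ k
          = ((Fintype.card V : ℝ) - 1) * m ^ k := by
        rw [Finset.sum_congr rfl (fun w hw' => by
          rw [hw w (Finset.ne_of_mem_erase hw')]), Finset.sum_const, nsmul_eq_mul,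
          Finset.card_erase_of_mem (mem_univ v), Finset.card_univ,
          Nat.cast_sub Fintype.card_pos, Nat.cast_one]
      linarith
    have hS : m ^ k = δ / (ρ + δ * ((Fintype.card V : ℝ) - 1)) := by
      rw [eq_div_iff hD.ne']
      have h10 : δ * 1 = δ * ((ρ / δ) * m ^ k + ((Fintype.card V : ℝ) - 1) * m ^ k) := by
        rw [← hsum]
      have h11 : δ * ((ρ / δ) * m ^ k) = ρ * m ^ k := by
        field_simp
      nlinarith [h10, h11]
    rw [← hS, key2 m hm0]
end

section
/- Let H be a k-uniform hypergraph with principal eigenpair (ρ, x) and maximum degree Δ. Define x^e = ∏_{u∈e} x_u and x^max = max_{e∈E} x^e. Then x^max ≤ x_max^k ≤ (Δ/ρ)·x^max. -/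
open Finset

theorem stmt14 (V : Type*) [Fintype V] [DecidableEq V] [Nonempty V]
    (k : ℕ) (hk : 2 ≤ k)
    (E : Finset (Finset V))
    (hunif : ∀ e ∈ E, e.card = k)
    (x : V → ℝ) (hx : ∀ v, 0 < x v)
    (ρ : ℝ) (hρ : 0 < ρ)
    (heig : ∀ v : V, ∑ e ∈ E.filter (fun e => v ∈ e), ∏ u ∈ e.erase v, x u
      = ρ * x v ^ (k - 1))
    (hE : E.Nonempty) :
    E.sup' hE (fun e => ∏ u ∈ e, x u) ≤ (Finset.univ.sup' Finset.univ_nonempty x) ^ k ∧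
      (Finset.univ.sup' Finset.univ_nonempty x) ^ k ≤ ((Finset.univ.sup' Finset.univ_nonempty (fun v => ((E.filter (fun e => v ∈ e)).card : ℝ))) / ρ) * E.sup' hE (fun e => ∏ u ∈ e, x u) := by
  set M : ℝ := Finset.univ.sup' Finset.univ_nonempty x with hM
  set P : ℝ := E.sup' hE (fun e => ∏ u ∈ e, x u) with hP
  have hxM : ∀ v, x v ≤ M := fun v => le_sup' x (mem_univ v)
  obtain ⟨v, -, hv⟩ := Finset.exists_mem_eq_sup' Finset.univ_nonempty x
  constructor
  · apply Finset.sup'_le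
    intro e he
    calc ∏ u ∈ e, x u ≤ ∏ u ∈ e, M :=
          Finset.prod_le_prod (fun u _ => (hx u).le) (fun u _ => hxM u)
      _ = M ^ k := by rw [Finset.prod_const, hunif e he]
  · -- key identity
    have key : ρ * M ^ k = ∑ e ∈ E.filter (fun e => v ∈ e), ∏ u ∈ e, x u := by
      have h1 := heig v
      have hk1 : k - 1 + 1 = k := by omega
      calc ρ * M ^ k = (ρ * x v ^ (k - 1)) * x v := by
            rw [← hv, mul_assoc, ← pow_succ, hk1]
        _ = (∑ e ∈ E.filter (fun e => v ∈ e), ∏ u ∈ e.erase v, x u) * x v := by rw [h1]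
        _ = ∑ e ∈ E.filter (fun e => v ∈ e), (∏ u ∈ e.erase v, x u) * x v := by
            rw [Finset.sum_mul]
        _ = ∑ e ∈ E.filter (fun e => v ∈ e), ∏ u ∈ e, x u := by
            apply Finset.sum_congr rfl
            intro e he
            exact Finset.prod_erase_mul e x (Finset.mem_filter.mp he).2
    have hbound : ∑ e ∈ E.filter (fun e => v ∈ e), ∏ u ∈ e, x u
        ≤ ((E.filter (fun e => v ∈ e)).card : ℝ) * P := by
      have := Finset.sum_le_card_nsmul (E.filter (fun e => v ∈ e))
        (fun e => ∏ u ∈ e, x u) P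
        (fun e he => le_sup' (fun e => ∏ u ∈ e, x u) (Finset.mem_filter.mp he).1)
      simpa [nsmul_eq_mul] using this
    have hΔ : ((E.filter (fun e => v ∈ e)).card : ℝ)
        ≤ Finset.univ.sup' Finset.univ_nonempty (fun v => ((E.filter (fun e => v ∈ e)).card : ℝ)) :=
      le_sup' (fun v => ((E.filter (fun e => v ∈ e)).card : ℝ)) (mem_univ v)
    have hPpos : 0 < P := by
      obtain ⟨e, he⟩ := hE
      exact lt_of_lt_of_le (Finset.prod_pos fun u _ => hx u) (le_sup' (fun e => ∏ u ∈ e, x u) he)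
    rw [div_mul_eq_mul_div, le_div_iff₀ hρ]
    calc M ^ k * ρ = ρ * M ^ k := mul_comm _ _
      _ = ∑ e ∈ E.filter (fun e => v ∈ e), ∏ u ∈ e, x u := key
      _ ≤ ((E.filter (fun e => v ∈ e)).card : ℝ) * P := hbound
      _ ≤ _ * P := mul_le_mul_of_nonneg_right hΔ hPpos.le
end

section
/- Let H be a k-uniform hypergraph with principal eigenpair (ρ, x), maximum degree Δ and minimum degree δ > 0. Let γ = x_max/x_min and Γ = x^max/x^min where x^e = ∏_{u∈e} x_u, x^max = max_e x^e, x^min = min_e x^e. Then Γ^{1/k} ≤ γ ≤ ((Δ/δ)·Γ)^{1/k}. -/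
open Finset

theorem stmt17 (V : Type*) [Fintype V] [DecidableEq V] [Nonempty V]
    (k : ℕ) (hk : 2 ≤ k)
    (E : Finset (Finset V))
    (hunif : ∀ e ∈ E, e.card = k)
    (x : V → ℝ) (hx : ∀ v, 0 < x v)
    (ρ : ℝ) (hρ : 0 < ρ)
    (heig : ∀ v : V, ∑ e ∈ E.filter (fun e => v ∈ e), ∏ u ∈ e.erase v, x u
      = ρ * x v ^ (k - 1))
    (hE : E.Nonempty)
    (hδ : 0 < (Finset.univ.inf' Finset.univ_nonempty (fun v => ((E.filter (fun e => v ∈ e)).card : ℝ)))) :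
    (E.sup' hE (fun e => ∏ u ∈ e, x u) / E.inf' hE (fun e => ∏ u ∈ e, x u)) ^ ((1:ℝ)/(k:ℝ))
      ≤ (Finset.univ.sup' Finset.univ_nonempty x) / (Finset.univ.inf' Finset.univ_nonempty x) ∧
    (Finset.univ.sup' Finset.univ_nonempty x) / (Finset.univ.inf' Finset.univ_nonempty x) ≤
      (((Finset.univ.sup' Finset.univ_nonempty (fun v => ((E.filter (fun e => v ∈ e)).card : ℝ))) / (Finset.univ.inf' Finset.univ_nonempty (fun v => ((E.filter (fun e => v ∈ e)).card : ℝ)))) * (E.sup' hE (fun e => ∏ u ∈ e, x u) / E.inf' hE (fun e => ∏ u ∈ e, x u))) ^ ((1:ℝ)/(k:ℝ)) := by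
  have hk0 : k ≠ 0 := by omega
  set xM := Finset.univ.sup' Finset.univ_nonempty x with hxMdef
  set xm := Finset.univ.inf' Finset.univ_nonempty x with hxmdef
  set XM := E.sup' hE (fun e => ∏ u ∈ e, x u) with hXMdef
  set Xm := E.inf' hE (fun e => ∏ u ∈ e, x u) with hXmdef
  set D := Finset.univ.sup' Finset.univ_nonempty (fun v => ((E.filter (fun e => v ∈ e)).card : ℝ)) with hDdef
  set d := Finset.univ.inf' Finset.univ_nonempty (fun v => ((E.filter (fun e => v ∈ e)).card : ℝ)) with hddef
  -- basic positivity
  have hxm_le : ∀ v, xm ≤ x v := fun v => inf'_le x (mem_univ v)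
  have hle_xM : ∀ v, x v ≤ xM := fun v => le_sup' x (mem_univ v)
  have hxm_pos : 0 < xm := by
    obtain ⟨v, -, hv⟩ := Finset.exists_mem_eq_inf' Finset.univ_nonempty x
    rw [hxmdef, hv]; exact hx v
  have hxM_pos : 0 < xM := lt_of_lt_of_le hxm_pos ((hxm_le _).trans (hle_xM (Classical.arbitrary V)))
  have hprod_lb : ∀ e ∈ E, xm ^ k ≤ ∏ u ∈ e, x u := by
    intro e he
    calc xm ^ k = ∏ _u ∈ e, xm := by rw [prod_const, hunif e he]
    _ ≤ ∏ u ∈ e, x u := Finset.prod_le_prod (fun _ _ => hxm_pos.le) (fun u _ => hxm_le u)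
  have hprod_ub : ∀ e ∈ E, ∏ u ∈ e, x u ≤ xM ^ k := by
    intro e he
    calc ∏ u ∈ e, x u ≤ ∏ _u ∈ e, xM :=
      Finset.prod_le_prod (fun u _ => (hx u).le) (fun u _ => hle_xM u)
    _ = xM ^ k := by rw [prod_const, hunif e he]
  have hXm_lb : xm ^ k ≤ Xm := by
    obtain ⟨e, he, hv⟩ := Finset.exists_mem_eq_inf' hE (fun e => ∏ u ∈ e, x u)
    rw [hXmdef, hv]; exact hprod_lb e he
  have hXM_ub : XM ≤ xM ^ k := by
    obtain ⟨e, he, hv⟩ := Finset.exists_mem_eq_sup' hE (fun e => ∏ u ∈ e, x u)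
    rw [hXMdef, hv]; exact hprod_ub e he
  have hXm_pos : 0 < Xm := lt_of_lt_of_le (pow_pos hxm_pos k) hXm_lb
  have hXm_le : ∀ e ∈ E, Xm ≤ ∏ u ∈ e, x u := fun e he => inf'_le (fun e => ∏ u ∈ e, x u) he
  have hle_XM : ∀ e ∈ E, ∏ u ∈ e, x u ≤ XM := fun e he => le_sup' (fun e => ∏ u ∈ e, x u) he
  have hXM_pos : 0 < XM := by
    obtain ⟨e, he⟩ := hE
    exact lt_of_lt_of_le hXm_pos ((hXm_le e he).trans (hle_XM e he))
  have hd_le : ∀ v, d ≤ ((E.filter (fun e => v ∈ e)).card : ℝ) := fun v => inf'_le (fun v => ((E.filter (fun e => v ∈ e)).card : ℝ)) (mem_univ v)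
  have hle_D : ∀ v, ((E.filter (fun e => v ∈ e)).card : ℝ) ≤ D := fun v => le_sup' (fun v => ((E.filter (fun e => v ∈ e)).card : ℝ)) (mem_univ v)
  have hD_pos : 0 < D := lt_of_lt_of_le hδ ((hd_le _).trans (hle_D (Classical.arbitrary V)))
  -- key identity
  have key : ∀ v, ρ * x v ^ k = ∑ e ∈ E.filter (fun e => v ∈ e), ∏ u ∈ e, x u := by
    intro v
    have : ∑ e ∈ E.filter (fun e => v ∈ e), ∏ u ∈ e, x u
        = x v * ∑ e ∈ E.filter (fun e => v ∈ e), ∏ u ∈ e.erase v, x u := by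
      rw [Finset.mul_sum]
      refine Finset.sum_congr rfl ?_
      intro e he
      exact (Finset.mul_prod_erase e x (Finset.mem_filter.mp he).2).symm
    rw [this, heig v]
    have : x v * (ρ * x v ^ (k - 1)) = ρ * (x v ^ (k-1) * x v) := by ring
    rw [this, ← pow_succ]
    congr 2
    omega
  -- bounds at extremal vertices
  have hub : ρ * xM ^ k ≤ D * XM := by
    obtain ⟨v, -, hv⟩ := Finset.exists_mem_eq_sup' Finset.univ_nonempty x
    rw [hxMdef, hv, key v]
    calc ∑ e ∈ E.filter (fun e => v ∈ e), ∏ u ∈ e, x u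
        ≤ ((E.filter (fun e => v ∈ e)).card : ℝ) * XM := by
          rw [← nsmul_eq_mul]
          exact Finset.sum_le_card_nsmul _ _ _ (fun e he =>
            hle_XM e (Finset.mem_filter.mp he).1)
      _ ≤ D * XM := mul_le_mul_of_nonneg_right (hle_D v) hXM_pos.le
  have hlb : d * Xm ≤ ρ * xm ^ k := by
    obtain ⟨v, -, hv⟩ := Finset.exists_mem_eq_inf' Finset.univ_nonempty x
    rw [hxmdef, hv, key v]
    calc d * Xm ≤ ((E.filter (fun e => v ∈ e)).card : ℝ) * Xm :=
          mul_le_mul_of_nonneg_right (hd_le v) hXm_pos.le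
      _ ≤ ∑ e ∈ E.filter (fun e => v ∈ e), ∏ u ∈ e, x u := by
          rw [← nsmul_eq_mul]
          exact Finset.card_nsmul_le_sum _ _ _ (fun e he =>
            hXm_le e (Finset.mem_filter.mp he).1)
  -- algebraic inequalities
  have h1 : XM / Xm ≤ (xM / xm) ^ k := by
    rw [div_pow]
    exact div_le_div₀ (pow_pos hxM_pos k).le hXM_ub (pow_pos hxm_pos k) hXm_lb
  have h2 : (xM / xm) ^ k ≤ D / d * (XM / Xm) := by
    rw [div_pow, div_mul_div_comm, div_le_div_iff₀ (pow_pos hxm_pos k) (by positivity)]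
    nlinarith [mul_le_mul_of_nonneg_right hub (pow_pos hxm_pos k).le,
      mul_le_mul_of_nonneg_right hlb (pow_pos hxM_pos k).le,
      (pow_pos hxM_pos k), (pow_pos hxm_pos k)]
  have hbase_pos : 0 < xM / xm := div_pos hxM_pos hxm_pos
  have hpow : ((xM / xm) ^ k) ^ ((1:ℝ)/(k:ℝ)) = xM / xm := by
    rw [one_div]
    exact Real.pow_rpow_inv_natCast hbase_pos.le hk0
  constructor
  · calc (XM / Xm) ^ ((1:ℝ)/(k:ℝ)) ≤ ((xM / xm) ^ k) ^ ((1:ℝ)/(k:ℝ)) :=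
        Real.rpow_le_rpow (by positivity) h1 (by positivity)
      _ = xM / xm := hpow
  · calc xM / xm = ((xM / xm) ^ k) ^ ((1:ℝ)/(k:ℝ)) := hpow.symm
      _ ≤ (D / d * (XM / Xm)) ^ ((1:ℝ)/(k:ℝ)) :=
        Real.rpow_le_rpow (by positivity) h2 (by positivity)
end

section
/- Let H be a k-uniform hypergraph with m edges, every vertex having positive degree, and principal eigenpair (ρ, x) normalized by ∑_v x_v^k = 1. If ∏_{u∈e} x_u is the same for all edges e (i.e., Γ(H) = 1), then the product ∏_{u∈e} d(u) of vertex degrees over any edge e equals ρ^k; in particular it is the same for every edge. -/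
open Finset

theorem stmt18 (V : Type*) [Fintype V] [DecidableEq V] [Nonempty V]
    (k : ℕ) (hk : 2 ≤ k)
    (E : Finset (Finset V))
    (hunif : ∀ e ∈ E, e.card = k)
    (x : V → ℝ) (hx : ∀ v, 0 < x v)
    (ρ : ℝ) (hρ : 0 < ρ)
    (heig : ∀ v : V, ∑ e ∈ E.filter (fun e => v ∈ e), ∏ u ∈ e.erase v, x u
      = ρ * x v ^ (k - 1))
    (hnorm : ∑ v : V, x v ^ k = 1)
    (hE : E.Nonempty)
    (hdeg : ∀ v : V, 0 < (E.filter (fun e => v ∈ e)).card)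
    (hconst : ∀ e ∈ E, ∀ e' ∈ E, (∏ u ∈ e, x u) = ∏ u ∈ e', x u) :
    ∀ e ∈ E, (∏ u ∈ e, ((E.filter (fun e' => u ∈ e')).card : ℝ)) = ρ ^ k := by
  obtain ⟨e0, he0⟩ := hE
  set c := ∏ u ∈ e0, x u with hc
  have hcpos : 0 < c := Finset.prod_pos (fun u _ => hx u)
  have hk1 : k - 1 + 1 = k := by omega
  have hd : ∀ v : V, ((E.filter (fun e' => v ∈ e')).card : ℝ) = ρ * x v ^ k / c := by
    intro v
    have h1 : ∀ e ∈ E.filter (fun e => v ∈ e), ∏ u ∈ e.erase v, x u = c / x v := by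
      intro e he
      rw [Finset.mem_filter] at he
      have hce : ∏ u ∈ e, x u = c := hconst e he.1 e0 he0
      have hme := Finset.mul_prod_erase e x he.2
      rw [eq_div_iff (ne_of_gt (hx v))]
      rw [← hce, ← hme]; ring
    have h2 := heig v
    rw [Finset.sum_congr rfl h1, Finset.sum_const, nsmul_eq_mul] at h2
    have hxv := hx v
    have hxk : x v ^ (k - 1) * x v = x v ^ k := by
      rw [← pow_succ, hk1]
    field_simp at h2 ⊢
    nlinarith [h2, hxk]
  intro e he
  have hcard : e.card = k := hunif e he
  have hce : ∏ u ∈ e, x u = c := hconst e he e0 he0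
  calc (∏ u ∈ e, ((E.filter (fun e' => u ∈ e')).card : ℝ))
      = ∏ u ∈ e, (ρ * x u ^ k / c) := Finset.prod_congr rfl (fun u _ => hd u)
    _ = ρ ^ k := by
        rw [Finset.prod_div_distrib, Finset.prod_mul_distrib, Finset.prod_const, Finset.prod_const,
          Finset.prod_pow, hce, hcard]
        field_simp
end

section
/- Let H be a k-uniform hypergraph with m ≥ 1 edges in which every vertex has positive degree, and suppose there is a constant D > 0 such that ∏_{u∈e} d(u) = D for every edge e. Then the vector x defined by x_u = (d(u)/(km))^{1/k} satisfies ∑_v x_v^k = 1 and ∑_{e ∋ v} ∏_{u∈e,u≠v} x_u = D^{1/k} · x_v^{k-1} for every vertex v; i.e., (D^{1/k}, x) is a positive ℓ^k-normalized eigenpair, and ∏_{u∈e} x_u = D^{1/k}/(km) is the same for every edge e. -/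
open Finset

theorem stmt19 (V : Type*) [Fintype V] [DecidableEq V] [Nonempty V]
    (k : ℕ) (hk : 2 ≤ k)
    (E : Finset (Finset V))
    (hunif : ∀ e ∈ E, e.card = k)
    (hE : E.Nonempty)
    (hdeg : ∀ v : V, 0 < (E.filter (fun e => v ∈ e)).card)
    (D : ℝ) (hD : 0 < D)
    (hconst : ∀ e ∈ E, (∏ u ∈ e, ((E.filter (fun e' => u ∈ e')).card : ℝ)) = D)
    (x : V → ℝ)
    (hxdef : ∀ u : V, x u = (((E.filter (fun e => u ∈ e)).card : ℝ) / (k * E.card)) ^ ((1:ℝ)/(k:ℝ))) :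
    (∑ v : V, x v ^ k = 1) ∧
    (∀ v : V, ∑ e ∈ E.filter (fun e => v ∈ e), ∏ u ∈ e.erase v, x u
      = D ^ ((1:ℝ)/(k:ℝ)) * x v ^ (k - 1)) ∧
    (∀ e ∈ E, (∏ u ∈ e, x u) = D ^ ((1:ℝ)/(k:ℝ)) / (k * E.card)) := by
  have hk0 : (k:ℝ) ≠ 0 := by positivity
  have hkm : (0:ℝ) < (k:ℝ) * E.card := by
    have := hE.card_pos
    have : (0:ℝ) < E.card := by exact_mod_cast this
    positivity
  have hdegR : ∀ u : V, (0:ℝ) < ((E.filter (fun e => u ∈ e)).card : ℝ) := by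
    intro u; exact_mod_cast hdeg u
  have hxpos : ∀ u : V, 0 < x u := by
    intro u
    rw [hxdef u]
    exact Real.rpow_pos_of_pos (div_pos (hdegR u) hkm) _
  have hxk : ∀ u : V, x u ^ k = ((E.filter (fun e => u ∈ e)).card : ℝ) / (k * E.card) := by
    intro u
    rw [hxdef u, ← Real.rpow_natCast _ k, ← Real.rpow_mul (le_of_lt (div_pos (hdegR u) hkm)),
      one_div_mul_cancel hk0, Real.rpow_one, div_eq_mul_inv]
  -- handshake
  have hhs : ∑ v : V, ((E.filter (fun e => v ∈ e)).card : ℝ) = (k:ℝ) * E.card := by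
    have : ∑ v : V, (E.filter (fun e => v ∈ e)).card = k * E.card := by
      calc ∑ v : V, (E.filter (fun e => v ∈ e)).card
          = ∑ v : V, ∑ e ∈ E, if v ∈ e then 1 else 0 := by
            simp only [Finset.card_filter]
        _ = ∑ e ∈ E, ∑ v : V, if v ∈ e then 1 else 0 := Finset.sum_comm
        _ = ∑ e ∈ E, e.card := by
            refine Finset.sum_congr rfl fun e _ => ?_
            simp
        _ = ∑ e ∈ E, k := Finset.sum_congr rfl hunif
        _ = k * E.card := by rw [Finset.sum_const, smul_eq_mul, mul_comm]
    exact_mod_cast this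
  -- part 3
  have part3 : ∀ e ∈ E, (∏ u ∈ e, x u) = D ^ ((1:ℝ)/(k:ℝ)) / (k * E.card) := by
    intro e he
    have hcard := hunif e he
    calc ∏ u ∈ e, x u
        = ∏ u ∈ e, (((E.filter (fun e' => u ∈ e')).card : ℝ) / (k * E.card)) ^ ((1:ℝ)/(k:ℝ)) := by
          exact Finset.prod_congr rfl fun u _ => hxdef u
      _ = (∏ u ∈ e, ((E.filter (fun e' => u ∈ e')).card : ℝ) / (k * E.card)) ^ ((1:ℝ)/(k:ℝ)) := by
          rw [← Real.finset_prod_rpow]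
          intro u _
          exact le_of_lt (div_pos (hdegR u) hkm)
      _ = (D / ((k:ℝ) * E.card) ^ k) ^ ((1:ℝ)/(k:ℝ)) := by
          rw [Finset.prod_div_distrib, hconst e he, Finset.prod_const, hcard]
      _ = D ^ ((1:ℝ)/(k:ℝ)) / (k * E.card) := by
          rw [Real.div_rpow hD.le (by positivity), ← Real.rpow_natCast ((k:ℝ)*E.card) k,
            ← Real.rpow_mul hkm.le]
          rw [mul_one_div, div_self hk0, Real.rpow_one, div_eq_mul_inv]
  refine ⟨?_, ?_, part3⟩
  · calc ∑ v : V, x v ^ k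
        = ∑ v : V, ((E.filter (fun e => v ∈ e)).card : ℝ) / (k * E.card) := by
          exact Finset.sum_congr rfl fun v _ => hxk v
      _ = (∑ v : V, ((E.filter (fun e => v ∈ e)).card : ℝ)) / (k * E.card) := by
          rw [Finset.sum_div]
      _ = 1 := by rw [hhs]; exact div_self hkm.ne'
  · intro v
    have hxv := hxpos v
    have h1 : ∀ e ∈ E.filter (fun e => v ∈ e), ∏ u ∈ e.erase v, x u
        = D ^ ((1:ℝ)/(k:ℝ)) / (k * E.card) / x v := by
      intro e he
      rw [Finset.mem_filter] at he
      have := Finset.mul_prod_erase e x he.2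
      rw [← part3 e he.1, ← this]
      field_simp
    rw [Finset.sum_congr rfl h1, Finset.sum_const, nsmul_eq_mul]
    have hxk1 : x v ^ (k - 1) = x v ^ k / x v := by
      rw [pow_sub₀ _ hxv.ne' (by omega : 1 ≤ k), pow_one, div_eq_mul_inv]
    rw [hxk1, hxk v]
    field_simp
end
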